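/- arXiv:1709.01639 — 3 statements merged into one kernel-verified Lean document; each statement's English description precedes it below -/
import Mathlib

section
/- Let s ∈ (0,1), set κ_s = sqrt(2/(e·s·(1-s))), and let ε satisfy 0 ≤ ε ≤ min{(e/2)·min{s,1-s}/max{s,1-s}, 1}. If ρ > 0 satisfies |log ρ| ≤ κ_s √ε, then (1-s)ρ^s + s ρ^(s-1) ≤ 1 + ε. -/
open Real

lemma exp_quad_aux (x : ℝ) (hx : |x| ≤ 1) : Real.exp x ≤ 1 + x + 3/4 * x ^ 2 := by
  have h := Real.exp_bound hx (n := 2) (by norm_num)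
  have hsum : ∑ m ∈ Finset.range 2, x ^ m / m.factorial = 1 + x := by
    simp [Finset.sum_range_succ]
  rw [hsum] at h
  have h2 : Real.exp x - (1 + x) ≤ |x| ^ 2 * (3 / (2 * 2)) := by
    have := (abs_le.mp h).2
    norm_num at this ⊢
    linarith
  rw [sq_abs] at h2
  linarith

theorem denom_le_one_add_eps (s ε ρ : ℝ) (hs : s ∈ Set.Ioo (0:ℝ) 1)
    (hε0 : 0 ≤ ε)
    (hε1 : ε ≤ min ((Real.exp 1 / 2) * (min s (1 - s) / max s (1 - s))) 1)
    (hρ : 0 < ρ)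
    (hlog : |Real.log ρ| ≤ Real.sqrt (2 / (Real.exp 1 * s * (1 - s))) * Real.sqrt ε) :
    (1 - s) * ρ ^ s + s * ρ ^ (s - 1) ≤ 1 + ε := by
  obtain ⟨hs0, hs1⟩ := hs
  set γ := Real.log ρ with hγ
  have h1s : 0 < 1 - s := by linarith
  have he : (0:ℝ) < Real.exp 1 := Real.exp_pos 1
  have he27 : (2.7:ℝ) < Real.exp 1 := by
    have := Real.exp_one_gt_d9; linarith
  have ha : (0:ℝ) ≤ 2 / (Real.exp 1 * s * (1 - s)) := by positivity
  -- γ² ≤ a ε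
  have hsq : γ ^ 2 ≤ 2 / (Real.exp 1 * s * (1 - s)) * ε := by
    have h := hlog
    rw [← Real.sqrt_mul ha] at h
    have h2 : |γ| ^ 2 ≤ Real.sqrt (2 / (Real.exp 1 * s * (1 - s)) * ε) ^ 2 :=
      pow_le_pow_left₀ (abs_nonneg _) h 2
    rwa [sq_abs, Real.sq_sqrt (by positivity)] at h2
  -- bound M² γ² ≤ 1 where M = max s (1-s)
  set M := max s (1 - s) with hM
  set m := min s (1 - s) with hm
  have hMm : m * M = s * (1 - s) := min_mul_max s (1 - s)
  have hM0 : 0 < M := lt_of_lt_of_le hs0 (le_max_left _ _)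
  have hm0 : 0 < m := lt_min hs0 h1s
  have hεM : ε ≤ (Real.exp 1 / 2) * (m / M) := le_trans hε1 (min_le_left _ _)
  have hMγsq : M ^ 2 * γ ^ 2 ≤ 1 := by
    have h1 : M ^ 2 * γ ^ 2 ≤ M ^ 2 * (2 / (Real.exp 1 * s * (1 - s)) * ε) := by
      apply mul_le_mul_of_nonneg_left hsq (by positivity)
    have h2 : M ^ 2 * (2 / (Real.exp 1 * s * (1 - s)) * ε)
        ≤ M ^ 2 * (2 / (Real.exp 1 * s * (1 - s)) * ((Real.exp 1 / 2) * (m / M))) := by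
      apply mul_le_mul_of_nonneg_left _ (by positivity)
      apply mul_le_mul_of_nonneg_left hεM (by positivity)
    have h3 : M ^ 2 * (2 / (Real.exp 1 * s * (1 - s)) * ((Real.exp 1 / 2) * (m / M))) = 1 := by
      field_simp
      linear_combination hMm
    linarith
  have hMγ : M * |γ| ≤ 1 := by
    have hnn : 0 ≤ M * |γ| := by positivity
    nlinarith [sq_abs γ]
  have hsγ : |s * γ| ≤ 1 := by
    rw [abs_mul, abs_of_pos hs0]
    calc s * |γ| ≤ M * |γ| :=
          mul_le_mul_of_nonneg_right (le_max_left _ _) (abs_nonneg _)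
      _ ≤ 1 := hMγ
  have hs1γ : |(s - 1) * γ| ≤ 1 := by
    rw [abs_mul, abs_sub_comm, abs_of_pos (by linarith : (0:ℝ) < 1 - s)]
    calc (1 - s) * |γ| ≤ M * |γ| :=
          mul_le_mul_of_nonneg_right (le_max_right _ _) (abs_nonneg _)
      _ ≤ 1 := hMγ
  -- rewrite rpow as exp
  have hρs : ρ ^ s = Real.exp (s * γ) := by
    rw [Real.rpow_def_of_pos hρ, hγ, mul_comm]
  have hρs1 : ρ ^ (s - 1) = Real.exp ((s - 1) * γ) := by
    rw [Real.rpow_def_of_pos hρ, hγ, mul_comm]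
  rw [hρs, hρs1]
  have e1 := exp_quad_aux (s * γ) hsγ
  have e2 := exp_quad_aux ((s - 1) * γ) hs1γ
  have key : (1 - s) * Real.exp (s * γ) + s * Real.exp ((s - 1) * γ)
      ≤ 1 + 3/4 * (s * (1 - s)) * γ ^ 2 := by
    have := mul_le_mul_of_nonneg_left e1 (le_of_lt h1s)
    have := mul_le_mul_of_nonneg_left e2 (le_of_lt hs0)
    nlinarith
  have hfin : 3/4 * (s * (1 - s)) * γ ^ 2 ≤ ε := by
    have h1 : 3/4 * (s * (1 - s)) * γ ^ 2
        ≤ 3/4 * (s * (1 - s)) * (2 / (Real.exp 1 * s * (1 - s)) * ε) := by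
      apply mul_le_mul_of_nonneg_left hsq (by positivity)
    have h2 : 3/4 * (s * (1 - s)) * (2 / (Real.exp 1 * s * (1 - s)) * ε)
        = 3 / (2 * Real.exp 1) * ε := by
      field_simp; ring
    have h3 : 3 / (2 * Real.exp 1) * ε ≤ 1 * ε := by
      apply mul_le_mul_of_nonneg_right _ hε0
      rw [div_le_one (by positivity)]; linarith
    linarith
  linarith
end

section
/- Let s ∈ (0,1), κ_s = sqrt(2/(e·s·(1-s))), and 0 ≤ ε ≤ min{(e/2)·min{s,1-s}/max{s,1-s}, 1}. If ρ > 0 satisfies |log ρ| ≤ κ_s √ε, then g(s,ρ) := 1 - 1/((1-s)ρ^s + s ρ^(s-1)) ≤ ε. -/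
open Real

lemma exp_quad_bound (x : ℝ) (hx : |x| ≤ 1) :
    Real.exp x ≤ 1 + x + (Real.exp 1 / 2) * x ^ 2 := by
  have h := Real.exp_bound hx (n := 2) (by norm_num)
  have hsum : ∑ m ∈ Finset.range 2, x ^ m / m.factorial = 1 + x := by
    simp [Finset.sum_range_succ]
  rw [hsum] at h
  have h2 : Real.exp x - (1 + x) ≤ |x| ^ 2 * ((2:ℕ).succ / ((2:ℕ).factorial * 2)) :=
    (abs_sub_le_iff.1 h).1
  have hxsq : |x| ^ 2 = x ^ 2 := sq_abs x
  have he : (2:ℝ) ≤ Real.exp 1 := by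
    have := Real.add_one_le_exp (1:ℝ); linarith
  have : Real.exp x - (1 + x) ≤ (3/4) * x ^ 2 := by
    rw [hxsq] at h2; norm_num at h2; linarith
  nlinarith [sq_nonneg x]

theorem g_le_eps (s ε ρ : ℝ) (hs : s ∈ Set.Ioo (0:ℝ) 1)
    (hε0 : 0 ≤ ε)
    (hε1 : ε ≤ min ((Real.exp 1 / 2) * (min s (1 - s) / max s (1 - s))) 1)
    (hρ : 0 < ρ)
    (hlog : |Real.log ρ| ≤ Real.sqrt (2 / (Real.exp 1 * s * (1 - s))) * Real.sqrt ε) :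
    1 - 1 / ((1 - s) * ρ ^ s + s * ρ ^ (s - 1)) ≤ ε := by
  obtain ⟨hs0, hs1⟩ := hs
  have h1s : 0 < 1 - s := by linarith
  set t := Real.log ρ with ht
  set M := max s (1 - s) with hMdef
  set m := min s (1 - s) with hmdef
  have hεle : ε ≤ (Real.exp 1 / 2) * (m / M) := le_trans hε1 (min_le_left _ _)
  have hε1' : ε ≤ 1 := le_trans hε1 (min_le_right _ _)
  have hM : 0 < M := lt_max_of_lt_left hs0
  have hm : 0 < m := lt_min hs0 h1s
  have hmM : m * M = s * (1 - s) := min_mul_max s (1 - s)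
  have he : (0:ℝ) < Real.exp 1 := Real.exp_pos 1
  have hA : (0:ℝ) ≤ 2 / (Real.exp 1 * s * (1 - s)) := by positivity
  -- square the hypothesis
  have ht2 : t ^ 2 ≤ 2 / (Real.exp 1 * s * (1 - s)) * ε := by
    have h1 : |t| * |t| ≤ (Real.sqrt (2 / (Real.exp 1 * s * (1 - s))) * Real.sqrt ε) *
        (Real.sqrt (2 / (Real.exp 1 * s * (1 - s))) * Real.sqrt ε) :=
      mul_self_le_mul_self (abs_nonneg t) hlog
    have h2 : (Real.sqrt (2 / (Real.exp 1 * s * (1 - s))) * Real.sqrt ε) *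
        (Real.sqrt (2 / (Real.exp 1 * s * (1 - s))) * Real.sqrt ε)
        = 2 / (Real.exp 1 * s * (1 - s)) * ε := by
      rw [mul_mul_mul_comm, Real.mul_self_sqrt hA, Real.mul_self_sqrt hε0]
    rw [h2] at h1
    calc t ^ 2 = |t| * |t| := by rw [abs_mul_abs_self]; ring
      _ ≤ _ := h1
  -- key 1 : (e/2) * s*(1-s)*t^2 ≤ ε
  have key1 : Real.exp 1 / 2 * (s * (1 - s) * t ^ 2) ≤ ε := by
    have hss : 0 < s * (1 - s) := by positivity
    have : s * (1 - s) * t ^ 2 ≤ 2 / Real.exp 1 * ε := by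
      have h3 : s * (1 - s) * (2 / (Real.exp 1 * s * (1 - s))) = 2 / Real.exp 1 := by
        field_simp
      calc s * (1 - s) * t ^ 2 ≤ s * (1 - s) * (2 / (Real.exp 1 * s * (1 - s)) * ε) := by
            exact mul_le_mul_of_nonneg_left ht2 (le_of_lt hss)
        _ = 2 / Real.exp 1 * ε := by rw [← mul_assoc, h3]
    calc Real.exp 1 / 2 * (s * (1 - s) * t ^ 2) ≤ Real.exp 1 / 2 * (2 / Real.exp 1 * ε) :=
          mul_le_mul_of_nonneg_left this (by positivity)
      _ = ε := by field_simp
  -- key 2 : M * |t| ≤ 1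
  have key2 : M * |t| ≤ 1 := by
    have hε2 : ε ≤ Real.exp 1 / 2 * (m / M) := hεle
    have h4 : t ^ 2 ≤ 1 / M ^ 2 := by
      have : 2 / (Real.exp 1 * s * (1 - s)) * ε ≤
          2 / (Real.exp 1 * s * (1 - s)) * (Real.exp 1 / 2 * (m / M)) :=
        mul_le_mul_of_nonneg_left hε2 hA
      have heq : 2 / (Real.exp 1 * s * (1 - s)) * (Real.exp 1 / 2 * (m / M)) = 1 / M ^ 2 := by
        have h' : s * (1 - s) = m * M := hmM.symm
        field_simp
        linear_combination hmM
      linarith [ht2]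
    have hMt : (M * |t|) ^ 2 ≤ 1 := by
      have : M ^ 2 * t ^ 2 ≤ M ^ 2 * (1 / M ^ 2) := mul_le_mul_of_nonneg_left h4 (by positivity)
      have h5 : M ^ 2 * (1 / M ^ 2) = 1 := by field_simp
      calc (M * |t|) ^ 2 = M ^ 2 * t ^ 2 := by rw [mul_pow, sq_abs]
        _ ≤ 1 := by linarith
    nlinarith [mul_nonneg (le_of_lt hM) (abs_nonneg t)]
  -- bounds on arguments
  have hst : |t * s| ≤ 1 := by
    rw [abs_mul, abs_of_pos hs0]
    calc |t| * s ≤ |t| * M := mul_le_mul_of_nonneg_left (le_max_left _ _) (abs_nonneg t)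
      _ ≤ 1 := by linarith [key2]
  have hst' : |t * (s - 1)| ≤ 1 := by
    rw [abs_mul, abs_of_neg (by linarith : s - 1 < 0)]
    calc |t| * -(s - 1) ≤ |t| * M := by
          apply mul_le_mul_of_nonneg_left _ (abs_nonneg t)
          have := le_max_right s (1 - s)
          rw [hMdef]; linarith
      _ ≤ 1 := by linarith [key2]
  have hb1 := exp_quad_bound (t * s) hst
  have hb2 := exp_quad_bound (t * (s - 1)) hst'
  -- rewrite rpow
  have hr1 : ρ ^ s = Real.exp (t * s) := by rw [Real.rpow_def_of_pos hρ]
  have hr2 : ρ ^ (s - 1) = Real.exp (t * (s - 1)) := by rw [Real.rpow_def_of_pos hρ]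
  rw [hr1, hr2]
  set F := (1 - s) * Real.exp (t * s) + s * Real.exp (t * (s - 1)) with hF
  have hFpos : 0 < F := by positivity
  have hFle : F ≤ 1 + ε := by
    have h6 : F ≤ (1 - s) * (1 + t * s + Real.exp 1 / 2 * (t * s) ^ 2)
        + s * (1 + t * (s - 1) + Real.exp 1 / 2 * (t * (s - 1)) ^ 2) := by
      apply add_le_add
      · exact mul_le_mul_of_nonneg_left hb1 (le_of_lt h1s)
      · exact mul_le_mul_of_nonneg_left hb2 (le_of_lt hs0)
    have h7 : (1 - s) * (1 + t * s + Real.exp 1 / 2 * (t * s) ^ 2)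
        + s * (1 + t * (s - 1) + Real.exp 1 / 2 * (t * (s - 1)) ^ 2)
        = 1 + Real.exp 1 / 2 * (s * (1 - s) * t ^ 2) := by ring
    linarith
  have h8 : (1 - ε) * F ≤ 1 := by nlinarith
  have h9 : 1 - ε ≤ 1 / F := (le_div_iff₀ hFpos).2 h8
  linarith
end

section
/- Let s ∈ (0,1), λ > 0, and λ̃ = λ(1 + δ) with 0 ≤ δ, δ ≤ 1 (FEM eigenvalue approximation from above). Then g(s, λ̃/λ) = 1 − 1/((1-s)(1+δ)^s + s(1+δ)^{s-1}) ≤ (s(1-s)e/2)·(log(1+δ))² ≤ (s(1-s)e/2)·δ². -/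
open Real

lemma exp_le_one_add_add_sq {x : ℝ} (hx : |x| ≤ 1) : Real.exp x ≤ 1 + x + x ^ 2 := by
  have h := Real.exp_bound hx (by norm_num : 0 < 3)
  have hsum : ∑ i ∈ Finset.range 3, x ^ i / i.factorial = 1 + x + x ^ 2 / 2 := by
    simp [Finset.sum_range_succ]
  rw [hsum] at h
  have h3 : |x| ^ 3 ≤ x ^ 2 := by
    have : |x| ^ 3 = |x| * x ^ 2 := by
      rw [pow_succ' (|x|) 2, sq_abs]
    rw [this]
    nlinarith [sq_nonneg x, abs_nonneg x]
  have h2 := (abs_le.mp h).2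
  norm_num [Nat.factorial] at h2
  nlinarith

theorem fem_g_bound (s lam lamt δ : ℝ) (hs : s ∈ Set.Ioo (0:ℝ) 1)
    (hl : 0 < lam) (hδ0 : 0 ≤ δ) (hδ1 : δ ≤ 1) (hlamt : lamt = lam * (1 + δ)) :
    1 - 1 / ((1 - s) * (lamt / lam) ^ s + s * (lamt / lam) ^ (s - 1))
        ≤ (s * (1 - s) * Real.exp 1 / 2) * (Real.log (1 + δ)) ^ 2 ∧
    (s * (1 - s) * Real.exp 1 / 2) * (Real.log (1 + δ)) ^ 2
        ≤ (s * (1 - s) * Real.exp 1 / 2) * δ ^ 2 := by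
  obtain ⟨hs0, hs1⟩ := hs
  have hδpos : (0:ℝ) < 1 + δ := by linarith
  have hratio : lamt / lam = 1 + δ := by
    rw [hlamt]; field_simp
  set γ := Real.log (1 + δ) with hγ
  have hγ0 : 0 ≤ γ := Real.log_nonneg (by linarith)
  have hγδ : γ ≤ δ := by
    have := Real.log_le_sub_one_of_pos hδpos
    linarith
  have hγ1 : γ ≤ 1 := le_trans hγδ hδ1
  have hcoef : 0 ≤ s * (1 - s) * Real.exp 1 / 2 := by
    have h1 := Real.exp_pos 1
    apply div_nonneg _ (by norm_num)
    apply mul_nonneg (mul_nonneg hs0.le (by linarith)) h1.le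
  constructor
  · rw [hratio]
    have hps : (1 + δ) ^ s = Real.exp (γ * s) := by
      rw [Real.rpow_def_of_pos hδpos]
    have hps1 : (1 + δ) ^ (s - 1) = Real.exp (γ * (s - 1)) := by
      rw [Real.rpow_def_of_pos hδpos]
    rw [hps, hps1]
    set D := (1 - s) * Real.exp (γ * s) + s * Real.exp (γ * (s - 1)) with hD
    have hD1 : 1 ≤ D := by
      have h1 := Real.add_one_le_exp (γ * s)
      have h2 := Real.add_one_le_exp (γ * (s - 1))
      have : (1 - s) * (γ * s + 1) + s * (γ * (s - 1) + 1) = 1 := by ring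
      nlinarith
    have hstep1 : 1 - 1 / D ≤ D - 1 := by
      have hDpos : 0 < D := by linarith
      have heq : 1 - 1 / D = (D - 1) / D := by field_simp
      rw [heq, div_le_iff₀ hDpos]
      nlinarith
    have ha : |γ * s| ≤ 1 := by
      rw [abs_of_nonneg (mul_nonneg hγ0 hs0.le)]
      nlinarith
    have hb : |γ * (s - 1)| ≤ 1 := by
      rw [abs_of_nonpos (by nlinarith)]
      nlinarith
    have e1 := exp_le_one_add_add_sq ha
    have e2 := exp_le_one_add_add_sq hb
    have hstep2 : D - 1 ≤ s * (1 - s) * γ ^ 2 := by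
      have key : (1 - s) * (1 + γ * s + (γ * s) ^ 2) +
          s * (1 + γ * (s - 1) + (γ * (s - 1)) ^ 2) = 1 + s * (1 - s) * γ ^ 2 := by
        ring
      nlinarith
    have he2 : (2:ℝ) ≤ Real.exp 1 := by
      have := Real.add_one_le_exp 1
      linarith
    have hfinal : s * (1 - s) * γ ^ 2 ≤ (s * (1 - s) * Real.exp 1 / 2) * γ ^ 2 := by
      nlinarith [sq_nonneg γ]
    linarith
  · apply mul_le_mul_of_nonneg_left _ hcoef
    nlinarith
end
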